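/- Let m ≥ 1 and let Γ and A be symmetric positive definite real m×m matrices. Let κ₁² denote the smallest eigenvalue of Γ, let K be the positive definite symmetric square root of Γ, let b₁ > 0 denote the smallest eigenvalue of K⁻¹ A K⁻¹, set α = √(b₁ κ₁² / 2) and ε₁ = α/b₁. Then for every ε ∈ (0, ε₁) and every s ∈ ℝ with s ≠ 0, the matrix D(ε, s) = −ε s² I + i s Γ + ε A is invertible and ‖D(ε, s)⁻¹‖ ≤ (1/κ₁²) · min{ 2/(b₁ ε), max{ 1/α, 1/|s| } }. -/

import Mathlib

noncomputable section

/-- Operator norm of a complex `m × m` matrix induced by the Euclidean norm on `ℂ^m`. -/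
def l2OpNorm (m : ℕ) (D : Matrix (Fin m) (Fin m) ℂ) : ℝ :=
  ‖LinearMap.toContinuousLinearMap (Matrix.toEuclideanLin D)‖

/-- The propagator matrix `D(ε,s) = -ε s² 1 + i s Γ + ε A`. -/
def propagator (m : ℕ) (Γ A : Matrix (Fin m) (Fin m) ℝ) (ε s : ℝ) :
    Matrix (Fin m) (Fin m) ℂ :=
  (-(ε * s ^ 2) : ℂ) • (1 : Matrix (Fin m) (Fin m) ℂ)
    + (Complex.I * s) • Γ.map (fun a => (a : ℂ))
    + (ε : ℂ) • A.map (fun a => (a : ℂ))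

open Matrix Complex
open scoped Matrix.Norms.L2Operator ComplexOrder Pointwise

namespace PropagatorAux

variable {m : ℕ}

/-- entrywise coercion to ℂ -/
def cm (X : Matrix (Fin m) (Fin m) ℝ) : Matrix (Fin m) (Fin m) ℂ :=
  X.map (fun a => (a : ℂ))

lemma cm_mul (X Y : Matrix (Fin m) (Fin m) ℝ) : cm (X * Y) = cm X * cm Y :=
  Matrix.map_mul (f := Complex.ofRealHom)

lemma cm_one : cm (1 : Matrix (Fin m) (Fin m) ℝ) = 1 :=
  Matrix.map_one _ (by simp) (by simp)

lemma cm_smul (t : ℝ) (X : Matrix (Fin m) (Fin m) ℝ) : cm (t • X) = (t : ℂ) • cm X := by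
  ext i j; simp [cm]

lemma cm_sub (X Y : Matrix (Fin m) (Fin m) ℝ) : cm (X - Y) = cm X - cm Y := by
  ext i j; simp [cm]

lemma cm_conjTranspose (X : Matrix (Fin m) (Fin m) ℝ) : cm (Xᴴ) = (cm X)ᴴ :=
  Matrix.conjTranspose_map _ (fun a => by simp)

lemma cm_psd {X : Matrix (Fin m) (Fin m) ℝ} (hX : X.PosSemidef) : (cm X).PosSemidef := by
  obtain ⟨B, hB⟩ : ∃ B : Matrix (Fin m) (Fin m) ℝ, X = Bᴴ * B := by
    open scoped MatrixOrder in
    refine ⟨CFC.sqrt X, ?_⟩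
    open scoped MatrixOrder in
    rw [← Matrix.star_eq_conjTranspose, (IsSelfAdjoint.of_nonneg (CFC.sqrt_nonneg X)).star_eq,
      CFC.sqrt_mul_sqrt_self X hX.nonneg]
  have h : cm X = (cm B)ᴴ * cm B := by
    rw [hB, cm_mul, cm_conjTranspose]
  exact h ▸ Matrix.posSemidef_conjTranspose_mul_self _

lemma psd_smul {X : Matrix (Fin m) (Fin m) ℝ} (hX : X.PosSemidef) {c : ℝ} (hc : 0 ≤ c) :
    (c • X).PosSemidef := by
  refine .of_dotProduct_mulVec_nonneg ?_ ?_
  · show (c • X)ᴴ = c • X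
    rw [Matrix.conjTranspose_smul, star_trivial, hX.1.eq]
  · intro x
    rw [Matrix.smul_mulVec, dotProduct_smul]
    exact smul_nonneg hc (hX.dotProduct_mulVec_nonneg x)

lemma one_psd : (1 : Matrix (Fin m) (Fin m) ℝ).PosSemidef := Matrix.PosSemidef.one

lemma sub_smul_one_psd {X : Matrix (Fin m) (Fin m) ℝ} (hX : X.IsHermitian) {c : ℝ}
    (hc : ∀ μ ∈ spectrum ℝ X, c ≤ μ) :
    (X - c • (1 : Matrix (Fin m) (Fin m) ℝ)).PosSemidef := by
  have h1 : (c • (1 : Matrix (Fin m) (Fin m) ℝ)).IsHermitian := by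
    show (c • (1 : Matrix (Fin m) (Fin m) ℝ))ᴴ = _
    rw [Matrix.conjTranspose_smul, star_trivial, Matrix.conjTranspose_one]
  have hH : (X - c • (1 : Matrix (Fin m) (Fin m) ℝ)).IsHermitian := hX.sub h1
  refine (Matrix.IsHermitian.posSemidef_iff_eigenvalues_nonneg hH).mpr (Pi.le_def.mpr fun i => ?_)
  have hmem := Matrix.IsHermitian.eigenvalues_mem_spectrum_real hH i
  have hset : spectrum ℝ (X - c • (1 : Matrix (Fin m) (Fin m) ℝ)) = spectrum ℝ X - ({c} : Set ℝ) := by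
    rw [spectrum.sub_singleton_eq]
    congr 1
    rw [Algebra.algebraMap_eq_smul_one]
  rw [hset] at hmem
  obtain ⟨μ, hμ, r, hr, hrr⟩ := hmem
  rw [Set.mem_singleton_iff] at hr
  have h2 : μ - r = Matrix.IsHermitian.eigenvalues hH i := hrr
  have := hc μ hμ
  rw [hr] at h2
  simp only [Pi.zero_apply]
  linarith

lemma spec_pos {X : Matrix (Fin m) (Fin m) ℝ} (hX : X.PosDef) {c : ℝ}
    (hc : c ∈ spectrum ℝ X) : 0 < c := by
  by_contra h
  push_neg at h
  have hpsd : ((-c) • (1 : Matrix (Fin m) (Fin m) ℝ)).PosSemidef :=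
    psd_smul one_psd (neg_nonneg.2 h)
  have hunit : IsUnit (X + (-c) • (1 : Matrix (Fin m) (Fin m) ℝ)) :=
    (hX.add_posSemidef hpsd).isUnit
  rw [spectrum.mem_iff] at hc
  apply hc
  have heq : algebraMap ℝ (Matrix (Fin m) (Fin m) ℝ) c - X
      = -(X + (-c) • (1 : Matrix (Fin m) (Fin m) ℝ)) := by
    rw [Algebra.algebraMap_eq_smul_one]
    module
  rw [heq]
  exact hunit.neg

lemma dot_self_eq (x : EuclideanSpace ℂ (Fin m)) :
    star (WithLp.equiv 2 (Fin m → ℂ) x) ⬝ᵥ (WithLp.equiv 2 (Fin m → ℂ) x) = (‖x‖ : ℂ) ^ 2 := by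
  have h := (inner_self_eq_norm_sq_to_K (𝕜 := ℂ) x)
  rw [EuclideanSpace.inner_eq_star_dotProduct] at h
  rw [dotProduct_comm]
  exact h

lemma quad {H : Matrix (Fin m) (Fin m) ℂ} (hH : H.PosSemidef) (x : EuclideanSpace ℂ (Fin m)) :
    ∃ q : ℝ, 0 ≤ q ∧
      star (WithLp.equiv 2 (Fin m → ℂ) x) ⬝ᵥ (H *ᵥ WithLp.equiv 2 (Fin m → ℂ) x) = (q : ℂ) := by
  have h := hH.dotProduct_mulVec_nonneg (WithLp.equiv 2 (Fin m → ℂ) x)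
  rw [Complex.le_def] at h
  refine ⟨_, by simpa using h.1, ?_⟩
  rw [Complex.ext_iff]
  constructor
  · simp
  · simpa using h.2.symm

lemma dot_sub_smul (H : Matrix (Fin m) (Fin m) ℂ) (r : ℝ) (x : EuclideanSpace ℂ (Fin m)) :
    star (WithLp.equiv 2 (Fin m → ℂ) x) ⬝ᵥ ((H - (r : ℂ) • 1) *ᵥ WithLp.equiv 2 (Fin m → ℂ) x)
      = star (WithLp.equiv 2 (Fin m → ℂ) x) ⬝ᵥ (H *ᵥ WithLp.equiv 2 (Fin m → ℂ) x)
        - (r : ℂ) * (‖x‖ : ℂ) ^ 2 := by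
  rw [Matrix.sub_mulVec, dotProduct_sub, Matrix.smul_mulVec, Matrix.one_mulVec,
      dotProduct_smul, dot_self_eq, smul_eq_mul]

lemma opNorm_le_of_bound {A : Matrix (Fin m) (Fin m) ℂ} {c : ℝ} (hc : 0 ≤ c)
    (h : ∀ x : EuclideanSpace ℂ (Fin m), ‖toEuclideanCLM (𝕜 := ℂ) A x‖ ≤ c * ‖x‖) :
    l2OpNorm m A ≤ c :=
  ContinuousLinearMap.opNorm_le_bound _ hc h

lemma inner_clm (A : Matrix (Fin m) (Fin m) ℂ) (x : EuclideanSpace ℂ (Fin m)) :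
    (inner ℂ x (toEuclideanCLM (𝕜 := ℂ) A x) : ℂ)
      = star (WithLp.equiv 2 (Fin m → ℂ) x) ⬝ᵥ (A *ᵥ WithLp.equiv 2 (Fin m → ℂ) x) := by
  rw [EuclideanSpace.inner_eq_star_dotProduct, dotProduct_comm]
  rfl

lemma clm_apply_equiv (A : Matrix (Fin m) (Fin m) ℂ) (x : EuclideanSpace ℂ (Fin m)) :
    WithLp.equiv 2 (Fin m → ℂ) (toEuclideanCLM (𝕜 := ℂ) A x)
      = A *ᵥ WithLp.equiv 2 (Fin m → ℂ) x := by
  rfl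

lemma dot_smul_sub (H : Matrix (Fin m) (Fin m) ℂ) (r : ℝ) (x : EuclideanSpace ℂ (Fin m)) :
    star (WithLp.equiv 2 (Fin m → ℂ) x) ⬝ᵥ (((r : ℂ) • 1 - H) *ᵥ WithLp.equiv 2 (Fin m → ℂ) x)
      = (r : ℂ) * (‖x‖ : ℂ) ^ 2
        - star (WithLp.equiv 2 (Fin m → ℂ) x) ⬝ᵥ (H *ᵥ WithLp.equiv 2 (Fin m → ℂ) x) := by
  rw [Matrix.sub_mulVec, dotProduct_sub, Matrix.smul_mulVec, Matrix.one_mulVec,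
      dotProduct_smul, dot_self_eq, smul_eq_mul]

lemma dot_conj (N : Matrix (Fin m) (Fin m) ℂ) (v : Fin m → ℂ) :
    star (N *ᵥ v) ⬝ᵥ (N *ᵥ v) = star v ⬝ᵥ ((Nᴴ * N) *ᵥ v) := by
  simp only [Matrix.star_mulVec, Matrix.dotProduct_mulVec, Matrix.vecMul_vecMul]

end PropagatorAux

open PropagatorAux

set_option maxHeartbeats 1600000 in
theorem propagator_inverse_bound_full
    (m : ℕ) (hm : 1 ≤ m)
    (Γ A : Matrix (Fin m) (Fin m) ℝ)
    (hΓsymm : Γ.IsSymm) (hΓpos : Γ.PosDef) (hAsymm : A.IsSymm) (hApos : A.PosDef)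
    (κ₁ : ℝ) (hκ : IsLeast (spectrum ℝ Γ) (κ₁ ^ 2))
    (K : Matrix (Fin m) (Fin m) ℝ) (hKsymm : K.IsSymm) (hKpos : K.PosDef)
    (hKsq : K * K = Γ)
    (b₁ : ℝ) (hb₁pos : 0 < b₁) (hb₁ : IsLeast (spectrum ℝ (K⁻¹ * A * K⁻¹)) b₁)
    (α : ℝ) (hα : α = Real.sqrt (b₁ * κ₁ ^ 2 / 2))
    (ε : ℝ) (hε : 0 < ε) (hε₁ : ε < α / b₁)
    (s : ℝ) (hs : s ≠ 0) :
    IsUnit (propagator m Γ A ε s) ∧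
      l2OpNorm m (propagator m Γ A ε s)⁻¹
        ≤ (1 / κ₁ ^ 2) * min (2 / (b₁ * ε)) (max (1 / α) (1 / |s|)) := by
  classical
  have hκpos : 0 < κ₁ ^ 2 := spec_pos hΓpos hκ.1
  have hαpos : 0 < α := by
    rw [hα]; exact Real.sqrt_pos.2 (by positivity)
  have hεb : ε * b₁ < α := by
    rwa [lt_div_iff₀ hb₁pos] at hε₁
  have hspos : 0 < |s| := abs_pos.2 hs
  -- K facts
  have hKdet : IsUnit K.det := (Matrix.isUnit_iff_isUnit_det K).mp hKpos.isUnit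
  have hK1 : K * K⁻¹ = 1 := Matrix.mul_nonsing_inv K hKdet
  have hK2 : K⁻¹ * K = 1 := Matrix.nonsing_inv_mul K hKdet
  have hKinvT : K⁻¹ᴴ = K⁻¹ := by
    rw [Matrix.conjTranspose_eq_transpose_of_trivial, Matrix.transpose_nonsing_inv, hKsymm.eq]
  set B : Matrix (Fin m) (Fin m) ℝ := K⁻¹ * A * K⁻¹ with hBdef
  set C : Matrix (Fin m) (Fin m) ℝ := K⁻¹ * K⁻¹ with hCdef
  have hBherm : B.IsHermitian := by
    have h := Matrix.isHermitian_conjTranspose_mul_mul K⁻¹ hApos.1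
    rwa [hKinvT] at h
  -- real psd facts
  have hB0 : (B - b₁ • (1 : Matrix (Fin m) (Fin m) ℝ)).PosSemidef :=
    sub_smul_one_psd hBherm fun μ hμ => hb₁.2 hμ
  have hΓ0 : (Γ - κ₁ ^ 2 • (1 : Matrix (Fin m) (Fin m) ℝ)).PosSemidef :=
    sub_smul_one_psd hΓpos.1 fun μ hμ => hκ.2 hμ
  have hKG : K⁻¹ * Γ * K⁻¹ = 1 := by
    rw [← hKsq]
    calc K⁻¹ * (K * K) * K⁻¹ = (K⁻¹ * K) * (K * K⁻¹) := by simp only [Matrix.mul_assoc]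
      _ = 1 := by rw [hK2, hK1, one_mul]
  have hP : ((κ₁ ^ 2)⁻¹ • (1 : Matrix (Fin m) (Fin m) ℝ) - C).PosSemidef := by
    have h1 := hΓ0.conjTranspose_mul_mul_same K⁻¹
    rw [hKinvT] at h1
    have h2 : K⁻¹ * (Γ - κ₁ ^ 2 • (1 : Matrix (Fin m) (Fin m) ℝ)) * K⁻¹
        = 1 - κ₁ ^ 2 • C := by
      rw [Matrix.mul_sub, Matrix.sub_mul, hKG]
      congr 1
      rw [Matrix.mul_smul, Matrix.smul_mul, Matrix.mul_one, hCdef]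
    rw [h2] at h1
    have h3 := psd_smul h1 (c := (κ₁ ^ 2)⁻¹) (by positivity)
    have h4 : (κ₁ ^ 2)⁻¹ • ((1 : Matrix (Fin m) (Fin m) ℝ) - κ₁ ^ 2 • C)
        = (κ₁ ^ 2)⁻¹ • (1 : Matrix (Fin m) (Fin m) ℝ) - C := by
      rw [smul_sub, smul_smul, inv_mul_cancel₀ hκpos.ne', one_smul]
    rwa [h4] at h3
  set t : ℝ := b₁ - s ^ 2 * (κ₁ ^ 2)⁻¹ with htdef
  set S : Matrix (Fin m) (Fin m) ℝ := B - s ^ 2 • C with hSdef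
  have hS0 : (S - t • (1 : Matrix (Fin m) (Fin m) ℝ)).PosSemidef := by
    have h1 := hB0.add (psd_smul hP (sq_nonneg s))
    have heq : (B - b₁ • (1 : Matrix (Fin m) (Fin m) ℝ))
        + s ^ 2 • ((κ₁ ^ 2)⁻¹ • (1 : Matrix (Fin m) (Fin m) ℝ) - C)
        = S - t • (1 : Matrix (Fin m) (Fin m) ℝ) := by
      rw [hSdef, htdef]; module
    rwa [heq] at h1
  -- complex matrices
  set Sc : Matrix (Fin m) (Fin m) ℂ := cm S with hScdef
  set MM : Matrix (Fin m) (Fin m) ℂ := (Complex.I * s) • 1 + (ε : ℂ) • Sc with hMdef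
  have hpsdC : (Sc - (t : ℂ) • 1).PosSemidef := by
    have h := cm_psd hS0
    rwa [cm_sub, cm_smul, cm_one] at h
  set c : ℝ := max |s| (b₁ * ε / 2) with hcdef
  have hcpos : 0 < c := lt_max_of_lt_right (by positivity)
  -- key lower bound
  have hkey : ∀ x : EuclideanSpace ℂ (Fin m),
      c * ‖x‖ ≤ ‖toEuclideanCLM (𝕜 := ℂ) MM x‖ := by
    intro x
    rcases eq_or_ne x 0 with hx0 | hx0
    · simp [hx0]
    have hxpos : 0 < ‖x‖ := norm_pos_iff.2 hx0
    obtain ⟨q0, hq0, hq0eq⟩ := quad hpsdC x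
    rw [dot_sub_smul] at hq0eq
    set q : ℝ := q0 + t * ‖x‖ ^ 2 with hqdef
    have hq : star (WithLp.equiv 2 (Fin m → ℂ) x) ⬝ᵥ (Sc *ᵥ WithLp.equiv 2 (Fin m → ℂ) x)
        = (q : ℂ) := by
      rw [hqdef]; push_cast; linear_combination hq0eq
    have hqt : t * ‖x‖ ^ 2 ≤ q := by rw [hqdef]; linarith
    have hz : (inner ℂ x (toEuclideanCLM (𝕜 := ℂ) MM x) : ℂ)
        = (Complex.I * s) * ((‖x‖ : ℝ) : ℂ) ^ 2 + (ε : ℂ) * (q : ℂ) := by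
      rw [inner_clm, hMdef, Matrix.add_mulVec, dotProduct_add,
          Matrix.smul_mulVec, Matrix.smul_mulVec, Matrix.one_mulVec,
          dotProduct_smul, dotProduct_smul, dot_self_eq, hq,
          smul_eq_mul, smul_eq_mul]
    set z : ℂ := (inner ℂ x (toEuclideanCLM (𝕜 := ℂ) MM x) : ℂ) with hzdef
    have hzre : z.re = ε * q := by
      rw [hz]; simp [← Complex.ofReal_pow]
    have hzim : z.im = s * ‖x‖ ^ 2 := by
      rw [hz]; simp [← Complex.ofReal_pow]
    have hCS : ‖z‖ ≤ ‖x‖ * ‖toEuclideanCLM (𝕜 := ℂ) MM x‖ := norm_inner_le_norm _ _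
    have h1 : |s| * ‖x‖ ^ 2 ≤ ‖z‖ := by
      have h := Complex.abs_im_le_norm z
      rw [hzim] at h
      calc |s| * ‖x‖ ^ 2 = |s * ‖x‖ ^ 2| := by
            rw [abs_mul, _root_.abs_of_nonneg (sq_nonneg ‖x‖)]
        _ ≤ _ := h
    have h2 : ε * q ≤ ‖z‖ := by
      have h := Complex.re_le_norm z
      rw [hzre] at h
      exact h
    have hb1 : |s| * ‖x‖ ≤ ‖toEuclideanCLM (𝕜 := ℂ) MM x‖ := by
      have h' : (|s| * ‖x‖) * ‖x‖ ≤ ‖toEuclideanCLM (𝕜 := ℂ) MM x‖ * ‖x‖ := by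
        calc (|s| * ‖x‖) * ‖x‖ = |s| * ‖x‖ ^ 2 := by ring
          _ ≤ ‖z‖ := h1
          _ ≤ ‖x‖ * ‖toEuclideanCLM (𝕜 := ℂ) MM x‖ := hCS
          _ = ‖toEuclideanCLM (𝕜 := ℂ) MM x‖ * ‖x‖ := mul_comm _ _
      exact le_of_mul_le_mul_right h' hxpos
    have hb2 : (b₁ * ε / 2) * ‖x‖ ≤ ‖toEuclideanCLM (𝕜 := ℂ) MM x‖ := by
      rcases le_or_gt (b₁ * ε / 2) |s| with hcase | hcase
      · exact le_trans (mul_le_mul_of_nonneg_right hcase (norm_nonneg x)) hb1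
      · have hsa : |s| < α / 2 := by
          apply lt_of_lt_of_le hcase
          nlinarith
        have hs2 : s ^ 2 < α ^ 2 / 4 := by
          nlinarith [_root_.sq_abs s, abs_nonneg s]
        have hα2 : α ^ 2 = b₁ * κ₁ ^ 2 / 2 := by
          rw [hα, Real.sq_sqrt (by positivity)]
        have hs2' : s ^ 2 < b₁ * κ₁ ^ 2 / 8 := by rw [hα2] at hs2; linarith
        have hupos : 0 < (κ₁ ^ 2)⁻¹ := by positivity
        have hsu : s ^ 2 * (κ₁ ^ 2)⁻¹ < b₁ / 8 := by
          have h := mul_lt_mul_of_pos_right hs2' hupos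
          have h8 : b₁ * κ₁ ^ 2 / 8 * (κ₁ ^ 2)⁻¹ = b₁ / 8 := by
            field_simp
            exact mul_inv_cancel₀ (by rintro rfl; simp at hκpos)
          rwa [h8] at h
        have htge : b₁ / 2 ≤ t := by rw [htdef]; linarith
        have h3 : (b₁ * ε / 2) * ‖x‖ ^ 2 ≤ ε * q := by
          have hq1 : ε * (t * ‖x‖ ^ 2) ≤ ε * q := mul_le_mul_of_nonneg_left hqt hε.le
          have hstep : ε * (b₁ / 2) * ‖x‖ ^ 2 ≤ (ε * t) * ‖x‖ ^ 2 :=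
            mul_le_mul_of_nonneg_right (mul_le_mul_of_nonneg_left htge hε.le) (sq_nonneg ‖x‖)
          calc (b₁ * ε / 2) * ‖x‖ ^ 2 = ε * (b₁ / 2) * ‖x‖ ^ 2 := by ring
            _ ≤ (ε * t) * ‖x‖ ^ 2 := hstep
            _ = ε * (t * ‖x‖ ^ 2) := by ring
            _ ≤ ε * q := hq1
        have h' : ((b₁ * ε / 2) * ‖x‖) * ‖x‖ ≤ ‖toEuclideanCLM (𝕜 := ℂ) MM x‖ * ‖x‖ := by
          calc ((b₁ * ε / 2) * ‖x‖) * ‖x‖ = (b₁ * ε / 2) * ‖x‖ ^ 2 := by ring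
            _ ≤ ε * q := h3
            _ ≤ ‖z‖ := h2
            _ ≤ ‖x‖ * ‖toEuclideanCLM (𝕜 := ℂ) MM x‖ := hCS
            _ = ‖toEuclideanCLM (𝕜 := ℂ) MM x‖ * ‖x‖ := mul_comm _ _
        exact le_of_mul_le_mul_right h' hxpos
    rw [hcdef, max_mul_of_nonneg _ _ (norm_nonneg x)]
    exact max_le hb1 hb2
  -- invertibility of MM
  have hMinj : Function.Injective (MM.mulVec) := by
    have hker : ∀ v : Fin m → ℂ, MM *ᵥ v = 0 → v = 0 := by
      intro v hv
      have happ : toEuclideanCLM (𝕜 := ℂ) MM ((WithLp.equiv 2 (Fin m → ℂ)).symm v)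
          = (WithLp.equiv 2 (Fin m → ℂ)).symm (MM *ᵥ v) := rfl
      have hx := hkey ((WithLp.equiv 2 (Fin m → ℂ)).symm v)
      rw [happ, hv] at hx
      have hz0 : ‖(WithLp.equiv 2 (Fin m → ℂ)).symm (0 : Fin m → ℂ)‖ = 0 := by
        simp
      rw [hz0] at hx
      have hn0 : ‖(WithLp.equiv 2 (Fin m → ℂ)).symm v‖ = 0 := by
        have hnn := norm_nonneg ((WithLp.equiv 2 (Fin m → ℂ)).symm v)
        nlinarith
      have := norm_eq_zero.mp hn0
      calc v = (WithLp.equiv 2 (Fin m → ℂ)) ((WithLp.equiv 2 (Fin m → ℂ)).symm v) := rfl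
        _ = 0 := by rw [this]; rfl
    intro v w h
    have hsub : MM *ᵥ (v - w) = 0 := by
      rw [Matrix.mulVec_sub, h, sub_self]
    exact sub_eq_zero.mp (hker _ hsub)
  have hMunit : IsUnit MM := Matrix.mulVec_injective_iff_isUnit.mp hMinj
  have hMdet : IsUnit MM.det := (Matrix.isUnit_iff_isUnit_det MM).mp hMunit
  have hMM1 : MM * MM⁻¹ = 1 := Matrix.mul_nonsing_inv MM hMdet
  have hMM2 : MM⁻¹ * MM = 1 := Matrix.nonsing_inv_mul MM hMdet
  -- factorization
  set Kc : Matrix (Fin m) (Fin m) ℂ := cm K with hKcdef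
  set N : Matrix (Fin m) (Fin m) ℂ := cm K⁻¹ with hNdef
  have hKcN : Kc * N = 1 := by rw [hKcdef, hNdef, ← cm_mul, hK1, cm_one]
  have hNKc : N * Kc = 1 := by rw [hKcdef, hNdef, ← cm_mul, hK2, cm_one]
  have hKBK : K * B * K = A := by
    rw [hBdef]
    calc K * (K⁻¹ * A * K⁻¹) * K = (K * K⁻¹) * (A * (K⁻¹ * K)) := by
          simp only [Matrix.mul_assoc]
      _ = A := by rw [hK1, hK2, one_mul, mul_one]
  have hKCK : K * C * K = 1 := by
    rw [hCdef]
    calc K * (K⁻¹ * K⁻¹) * K = (K * K⁻¹) * (K⁻¹ * K) := by simp only [Matrix.mul_assoc]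
      _ = 1 := by rw [hK1, hK2, one_mul]
  have hKSK : K * S * K = A - s ^ 2 • (1 : Matrix (Fin m) (Fin m) ℝ) := by
    rw [hSdef, Matrix.mul_sub, Matrix.sub_mul, hKBK]
    congr 1
    rw [Matrix.mul_smul, Matrix.smul_mul, hKCK]
  have e2 : Kc * Kc = cm Γ := by rw [hKcdef, ← cm_mul, hKsq]
  have e3 : Kc * Sc * Kc = cm A - ((s ^ 2 : ℝ) : ℂ) • 1 := by
    rw [hKcdef, hScdef, ← cm_mul, ← cm_mul, hKSK, cm_sub, cm_smul, cm_one]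
  have e1 : Kc * MM * Kc
      = (Complex.I * s) • (Kc * Kc) + (ε : ℂ) • (Kc * Sc * Kc) := by
    rw [hMdef, Matrix.mul_add, Matrix.add_mul, Matrix.mul_smul, Matrix.smul_mul,
        Matrix.mul_one, Matrix.mul_smul, Matrix.smul_mul]
  have hfact : propagator m Γ A ε s = Kc * MM * Kc := by
    rw [e1, e2, e3]
    show (-(↑ε * ↑s ^ 2) : ℂ) • (1 : Matrix (Fin m) (Fin m) ℂ)
        + (Complex.I * ↑s) • cm Γ + (↑ε : ℂ) • cm A = _
    push_cast
    module
  have hQ : (Kc * MM * Kc) * (N * (MM⁻¹ * N)) = 1 := by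
    calc (Kc * MM * Kc) * (N * (MM⁻¹ * N))
        = Kc * (MM * ((Kc * N) * (MM⁻¹ * N))) := by simp only [Matrix.mul_assoc]
      _ = 1 := by
          rw [hKcN, one_mul, ← Matrix.mul_assoc MM MM⁻¹ N, hMM1, one_mul, hKcN]
  have hQ' : (N * (MM⁻¹ * N)) * (Kc * MM * Kc) = 1 := by
    calc (N * (MM⁻¹ * N)) * (Kc * MM * Kc)
        = N * (MM⁻¹ * ((N * Kc) * (MM * Kc))) := by simp only [Matrix.mul_assoc]
      _ = 1 := by
          rw [hNKc, one_mul, ← Matrix.mul_assoc MM⁻¹ MM Kc, hMM2, one_mul, hNKc]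
  have hPunit : IsUnit (propagator m Γ A ε s) := by
    rw [hfact]
    exact ⟨⟨Kc * MM * Kc, N * (MM⁻¹ * N), hQ, hQ'⟩, rfl⟩
  have hPinv : (propagator m Γ A ε s)⁻¹ = N * (MM⁻¹ * N) := by
    apply Matrix.inv_eq_right_inv
    rw [hfact]
    exact hQ
  -- norm of N
  have hNherm : Nᴴ = N := by rw [hNdef, ← cm_conjTranspose, hKinvT]
  have hNN : Nᴴ * N = cm C := by rw [hNherm, hNdef, ← cm_mul, ← hCdef]
  have hCc : ((((κ₁ ^ 2)⁻¹ : ℝ) : ℂ) • (1 : Matrix (Fin m) (Fin m) ℂ) - cm C).PosSemidef := by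
    have h := cm_psd hP
    rwa [cm_sub, cm_smul, cm_one] at h
  have hNle : l2OpNorm m N ≤ Real.sqrt (κ₁ ^ 2)⁻¹ := by
    apply opNorm_le_of_bound (Real.sqrt_nonneg _)
    intro x
    obtain ⟨q0, hq0, hq0eq⟩ := quad hCc x
    rw [dot_smul_sub] at hq0eq
    have e0 : ((‖toEuclideanCLM (𝕜 := ℂ) N x‖ : ℝ) : ℂ) ^ 2
        = star (WithLp.equiv 2 (Fin m → ℂ) x) ⬝ᵥ (cm C *ᵥ WithLp.equiv 2 (Fin m → ℂ) x) := by
      rw [← dot_self_eq (toEuclideanCLM (𝕜 := ℂ) N x), clm_apply_equiv, dot_conj, hNN]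
    have e1' : star (WithLp.equiv 2 (Fin m → ℂ) x) ⬝ᵥ (cm C *ᵥ WithLp.equiv 2 (Fin m → ℂ) x)
        = (((κ₁ ^ 2)⁻¹ * ‖x‖ ^ 2 - q0 : ℝ) : ℂ) := by
      push_cast at hq0eq ⊢
      linear_combination -hq0eq
    have e2' : ‖toEuclideanCLM (𝕜 := ℂ) N x‖ ^ 2 = (κ₁ ^ 2)⁻¹ * ‖x‖ ^ 2 - q0 := by
      have h := e0.trans e1'
      exact_mod_cast h
    have e3' : ‖toEuclideanCLM (𝕜 := ℂ) N x‖ ^ 2 ≤ (κ₁ ^ 2)⁻¹ * ‖x‖ ^ 2 := by linarith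
    calc ‖toEuclideanCLM (𝕜 := ℂ) N x‖
        = Real.sqrt (‖toEuclideanCLM (𝕜 := ℂ) N x‖ ^ 2) := (Real.sqrt_sq (norm_nonneg _)).symm
      _ ≤ Real.sqrt ((κ₁ ^ 2)⁻¹ * ‖x‖ ^ 2) := Real.sqrt_le_sqrt e3'
      _ = Real.sqrt (κ₁ ^ 2)⁻¹ * ‖x‖ := by
          rw [Real.sqrt_mul (by positivity), Real.sqrt_sq (norm_nonneg _)]
  -- norm of MM⁻¹
  have hMinvle : l2OpNorm m MM⁻¹ ≤ c⁻¹ := by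
    apply opNorm_le_of_bound (by positivity)
    intro y
    have h1 : toEuclideanCLM (𝕜 := ℂ) MM (toEuclideanCLM (𝕜 := ℂ) MM⁻¹ y) = y := by
      have hmul : toEuclideanCLM (𝕜 := ℂ) MM * toEuclideanCLM (𝕜 := ℂ) MM⁻¹ = 1 := by
        rw [← _root_.map_mul, hMM1, _root_.map_one]
      calc toEuclideanCLM (𝕜 := ℂ) MM (toEuclideanCLM (𝕜 := ℂ) MM⁻¹ y)
          = (toEuclideanCLM (𝕜 := ℂ) MM * toEuclideanCLM (𝕜 := ℂ) MM⁻¹) y := rfl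
        _ = y := by rw [hmul]; rfl
    have h2 := hkey (toEuclideanCLM (𝕜 := ℂ) MM⁻¹ y)
    rw [h1] at h2
    calc ‖toEuclideanCLM (𝕜 := ℂ) MM⁻¹ y‖
        = c⁻¹ * (c * ‖toEuclideanCLM (𝕜 := ℂ) MM⁻¹ y‖) := by
          field_simp
      _ ≤ c⁻¹ * ‖y‖ := mul_le_mul_of_nonneg_left h2 (by positivity)
  -- final bound
  have hnorm_eq : ∀ X : Matrix (Fin m) (Fin m) ℂ, l2OpNorm m X = ‖X‖ := fun _ => rfl
  refine ⟨hPunit, ?_⟩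
  rw [hPinv]
  have hNnn : 0 ≤ l2OpNorm m N := by rw [hnorm_eq]; exact norm_nonneg _
  have hMnn : 0 ≤ l2OpNorm m MM⁻¹ := by rw [hnorm_eq]; exact norm_nonneg _
  calc l2OpNorm m (N * (MM⁻¹ * N))
      ≤ l2OpNorm m N * (l2OpNorm m MM⁻¹ * l2OpNorm m N) := by
        simp only [hnorm_eq]
        calc ‖N * (MM⁻¹ * N)‖ ≤ ‖N‖ * ‖MM⁻¹ * N‖ := Matrix.l2_opNorm_mul _ _
          _ ≤ ‖N‖ * (‖MM⁻¹‖ * ‖N‖) :=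
              mul_le_mul_of_nonneg_left (Matrix.l2_opNorm_mul _ _) (norm_nonneg _)
    _ ≤ Real.sqrt (κ₁ ^ 2)⁻¹ * (c⁻¹ * Real.sqrt (κ₁ ^ 2)⁻¹) := by
        exact mul_le_mul hNle (mul_le_mul hMinvle hNle hNnn (inv_nonneg.2 hcpos.le))
          (mul_nonneg hMnn hNnn) (Real.sqrt_nonneg _)
    _ = (κ₁ ^ 2)⁻¹ * c⁻¹ := by
        rw [mul_comm c⁻¹ (Real.sqrt (κ₁ ^ 2)⁻¹), ← mul_assoc,
            Real.mul_self_sqrt (by positivity)]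
    _ ≤ (1 / κ₁ ^ 2) * min (2 / (b₁ * ε)) (max (1 / α) (1 / |s|)) := by
        rw [one_div]
        apply mul_le_mul_of_nonneg_left _ (by positivity)
        apply le_min
        · have h2' : (2 : ℝ) / (b₁ * ε) = (b₁ * ε / 2)⁻¹ := by
            rw [inv_div]
          rw [h2']
          exact inv_anti₀ (by positivity) (le_max_right _ _)
        · apply le_max_of_le_right
          rw [one_div]
          exact inv_anti₀ hspos (le_max_left _ _)


end
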